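/- Let (A,X) be a featured graph on n vertices with color refinement relations r_0, r_1, …. Then the partition of the vertex set into equivalence classes of r_n is a stable partition: any two vertices u, v with r_n u v satisfy X_u = X_v, and for every equivalence class P of r_n, |N_G(u) ∩ P| = |N_G(v) ∩ P|. -/
import Mathlib


/-- A featured graph on `n` vertices: an adjacency matrix of a simple graph
(symmetric, 0/1 entries, zero diagonal) together with node features in `ℝ^d`. -/
structure FeaturedGraph (n d : ℕ) where
  A : Matrix (Fin n) (Fin n) ℝ
  X : Fin n → EuclideanSpace ℝ (Fin d)
  isSymm : A.IsSymm
  zeroOne : ∀ i j, A i j = 0 ∨ A i j = 1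
  loopless : ∀ i, A i i = 0

open Classical in
/-- The neighbor set of `u` in the simple graph with adjacency matrix `A`. -/
noncomputable def nbrs {n : ℕ} (A : Matrix (Fin n) (Fin n) ℝ) (u : Fin n) : Finset (Fin n) :=
  Finset.univ.filter fun z => A u z = 1

open Classical in
/-- The color refinement (1-WL) sequence of relations, for a vertex type `V` with
neighbor sets `N` and features `X`: `r 0 u v ↔ X u = X v`, and `r (t+1) u v` iff
`r t u v` and for every `w`, `u` and `v` have equally many neighbors `z` with `r t z w`. -/
noncomputable def colorRefine {V F : Type*} (N : V → Finset V) (X : V → F) :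
    ℕ → V → V → Prop
  | 0 => fun u v => X u = X v
  | t + 1 => fun u v => colorRefine N X t u v ∧
      ∀ w, ((N u).filter fun z => colorRefine N X t z w).card =
           ((N v).filter fun z => colorRefine N X t z w).card

open Classical Finset

section Aux

variable {V F : Type*} [Fintype V] [DecidableEq V] (N : V → Finset V) (X : V → F)

lemma cr_mono {t : ℕ} {u v : V} (h : colorRefine N X (t+1) u v) :
    colorRefine N X t u v := h.1

lemma cr_refl : ∀ t (u : V), colorRefine N X t u u
  | 0, u => rfl
  | t+1, u => ⟨cr_refl t u, fun _ => rfl⟩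

lemma cr_symm : ∀ t {u v : V}, colorRefine N X t u v → colorRefine N X t v u
  | 0, _, _, h => h.symm
  | t+1, _, _, h => ⟨cr_symm t h.1, fun w => (h.2 w).symm⟩

lemma cr_trans : ∀ t {u v w : V}, colorRefine N X t u v → colorRefine N X t v w →
    colorRefine N X t u w
  | 0, _, _, _, h, h' => h.trans h'
  | t+1, _, _, _, h, h' => ⟨cr_trans t h.1 h'.1, fun w => (h.2 w).trans (h'.2 w)⟩

lemma cr_zero_of {t : ℕ} {u v : V} (h : colorRefine N X t u v) : X u = X v := by
  induction t with
  | zero => exact h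
  | succ t ih => exact ih h.1

open Classical in
noncomputable def crCls (t : ℕ) (u : V) : Finset V :=
  Finset.univ.filter fun z => colorRefine N X t z u

lemma crCls_eq_iff {t : ℕ} {u v : V} :
    crCls N X t u = crCls N X t v ↔ colorRefine N X t u v := by
  constructor
  · intro h
    have hu : u ∈ crCls N X t u := by
      simp [crCls, cr_refl]
    rw [h] at hu
    simpa [crCls] using hu
  · intro h
    ext z
    simp only [crCls, mem_filter, mem_univ, true_and]
    exact ⟨fun hz => cr_trans N X t hz h, fun hz => cr_trans N X t hz (cr_symm N X t h)⟩

open Classical in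
/-- Map that reconstructs the level-`t` class from a level-`t+1` class. -/
noncomputable def crDown (t : ℕ) (S : Finset V) : Finset V :=
  Finset.univ.filter fun z => ∃ w ∈ S, colorRefine N X t z w

lemma crDown_cls (t : ℕ) (u : V) : crDown N X t (crCls N X (t+1) u) = crCls N X t u := by
  ext z
  simp only [crDown, crCls, mem_filter, mem_univ, true_and]
  constructor
  · rintro ⟨w, hw, hzw⟩
    exact cr_trans N X t hzw (cr_mono N X hw)
  · intro hz
    exact ⟨u, cr_refl N X (t+1) u, hz⟩

/-- Number of classes at level `t`. -/
noncomputable def crNum (t : ℕ) : ℕ := (Finset.univ.image (crCls N X t)).card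

def crStab (t : ℕ) : Prop := ∀ u v : V, colorRefine N X t u v → colorRefine N X (t+1) u v

lemma cr_iff_of_stab {t : ℕ} (h : crStab N X t) (u v : V) :
    colorRefine N X t u v ↔ colorRefine N X (t+1) u v :=
  ⟨h u v, cr_mono N X⟩

lemma crStab_succ {t : ℕ} (h : crStab N X t) : crStab N X (t+1) := by
  intro u v huv
  refine ⟨huv, fun w => ?_⟩
  have : ∀ x : V, ((N x).filter fun z => colorRefine N X (t+1) z w).card =
      ((N x).filter fun z => colorRefine N X t z w).card := by
    intro x
    congr 1
    apply Finset.filter_congr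
    intro z _
    simp [cr_iff_of_stab N X h z w]
  rw [this u, this v]
  exact huv.2 w

lemma crStab_of_le {s t : ℕ} (hst : s ≤ t) (h : crStab N X s) : crStab N X t := by
  induction t with
  | zero => simpa [Nat.le_zero.mp hst] using h
  | succ t ih =>
    rcases Nat.lt_or_ge s (t+1) with h' | h'
    · exact crStab_succ N X (ih (Nat.lt_succ_iff.mp h'))
    · have : s = t + 1 := le_antisymm hst h'
      simpa [this] using h

lemma crNum_le (t : ℕ) : crNum N X t ≤ crNum N X (t+1) := by
  have himg : Finset.univ.image (crCls N X t) =
      (Finset.univ.image (crCls N X (t+1))).image (crDown N X t) := by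
    rw [Finset.image_image]
    apply Finset.image_congr
    intro x _
    exact (crDown_cls N X t x).symm
  rw [crNum, himg]
  exact Finset.card_image_le.trans_eq rfl

lemma crNum_lt {t : ℕ} (h : ¬ crStab N X t) : crNum N X t < crNum N X (t+1) := by
  rcases lt_or_eq_of_le (crNum_le N X t) with h' | h'
  · exact h'
  exfalso
  apply h
  intro u v huv
  have himg : Finset.univ.image (crCls N X t) =
      (Finset.univ.image (crCls N X (t+1))).image (crDown N X t) := by
    rw [Finset.image_image]
    apply Finset.image_congr
    intro x _
    exact (crDown_cls N X t x).symm
  have hinj : Set.InjOn (crDown N X t) (Finset.univ.image (crCls N X (t+1))) := by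
    apply Finset.injOn_of_card_image_eq
    rw [← himg]
    exact h'
  have h1 : crCls N X (t+1) u = crCls N X (t+1) v := by
    apply hinj (Finset.mem_image_of_mem _ (Finset.mem_univ u))
      (Finset.mem_image_of_mem _ (Finset.mem_univ v))
    rw [crDown_cls, crDown_cls]
    exact (crCls_eq_iff N X).mpr huv
  exact (crCls_eq_iff N X).mp h1

lemma crNum_pos [Nonempty V] (t : ℕ) : 1 ≤ crNum N X t := by
  have : (Finset.univ.image (crCls N X t)).Nonempty :=
    ⟨crCls N X t (Classical.arbitrary V), Finset.mem_image_of_mem _ (Finset.mem_univ _)⟩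
  exact Finset.card_pos.mpr this

lemma crNum_le_card (t : ℕ) : crNum N X t ≤ Fintype.card V := by
  calc crNum N X t ≤ (Finset.univ : Finset V).card := Finset.card_image_le
  _ = Fintype.card V := Finset.card_univ

lemma crStab_exists [Nonempty V] : ∃ s ≤ Fintype.card V, crStab N X s := by
  have key : ∀ t : ℕ, (∃ s ≤ t, crStab N X s) ∨ t + 1 ≤ crNum N X t := by
    intro t
    induction t with
    | zero => exact Or.inr (crNum_pos N X 0)
    | succ t ih =>
      rcases ih with ⟨s, hs, hst⟩ | hc
      · exact Or.inl ⟨s, hs.trans (Nat.le_succ t), hst⟩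
      · by_cases hstab : crStab N X t
        · exact Or.inl ⟨t, Nat.le_succ t, hstab⟩
        · exact Or.inr (Nat.succ_le_of_lt (lt_of_le_of_lt hc (crNum_lt N X hstab)))
  rcases key (Fintype.card V) with ⟨s, hs, hst⟩ | hc
  · exact ⟨s, hs, hst⟩
  · exact absurd (crNum_le_card N X (Fintype.card V)) (by omega)

lemma crStab_card [Nonempty V] : crStab N X (Fintype.card V) := by
  obtain ⟨s, hs, hst⟩ := crStab_exists N X
  exact crStab_of_le N X hs hst

end Aux

open Classical in
/-- The equivalence classes of `r n` form a stable partition: related vertices have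
equal features and, for each class (the class of any vertex `w`), equally many
neighbors within that class. -/
theorem colorRefine_n_stablePartition {n d : ℕ} (G : FeaturedGraph n d)
    (u v : Fin n) (huv : colorRefine (nbrs G.A) G.X n u v) :
    G.X u = G.X v ∧
      ∀ w : Fin n,
        (nbrs G.A u ∩ Finset.univ.filter fun z => colorRefine (nbrs G.A) G.X n z w).card =
        (nbrs G.A v ∩ Finset.univ.filter fun z => colorRefine (nbrs G.A) G.X n z w).card := by
  have : Nonempty (Fin n) := ⟨u⟩
  have hstab : crStab (nbrs G.A) G.X n := by
    have := crStab_card (nbrs G.A) G.X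
    simpa [Fintype.card_fin] using this
  have h1 : colorRefine (nbrs G.A) G.X (n+1) u v := hstab u v huv
  refine ⟨cr_zero_of (nbrs G.A) G.X huv, fun w => ?_⟩
  have h2 := h1.2 w
  have hconv : ∀ x : Fin n,
      ((nbrs G.A x).filter fun z => colorRefine (nbrs G.A) G.X n z w) =
      (nbrs G.A x ∩ Finset.univ.filter fun z => colorRefine (nbrs G.A) G.X n z w) := by
    intro x
    ext z
    simp [Finset.mem_filter, Finset.mem_inter, and_assoc]
  rw [hconv, hconv] at h2
  exact h2
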